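/- Let A, B, C be modules over ℤ[U] and suppose there are ℤ[U]-module homomorphisms i : A → B, π : B → C, ∂ : C → A forming an exact sequence … → A →ⁱ B →^π C →^∂ A →ⁱ B → … (exact at every spot). Assume multiplication by U is bijective on B, and suppose k is such that Ker(U^k : A → A) = Ker(i). Then Im(U^k : C → C) = Im(π). -/

import Mathlib

/-- Multiplication by the variable `U` on a module over `ℤ[U]`. -/
noncomputable def Umul (M : Type*) [AddCommGroup M] [Module (Polynomial ℤ) M] :
    M →ₗ[Polynomial ℤ] M :=
  LinearMap.lsmul (Polynomial ℤ) M Polynomial.X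

lemma umul_pow_apply (M : Type*) [AddCommGroup M] [Module (Polynomial ℤ) M]
    (k : ℕ) (x : M) : ((Umul M) ^ k) x = (Polynomial.X : Polynomial ℤ) ^ k • x := by
  induction k generalizing x with
  | zero => simp
  | succ n ih =>
    rw [pow_succ, Module.End.mul_apply, ih]
    show (Polynomial.X : Polynomial ℤ) ^ n • (Polynomial.X : Polynomial ℤ) • x = _
    rw [← mul_smul, ← pow_succ]

/-- In an exact triangle `… → A → B → C → A → …` of `ℤ[U]`-modules with `U`
bijective on `B`, if `Ker(U^k : A → A) = Ker i` then `Im(U^k : C → C) = Im π`. -/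
theorem range_pow_eq_range_of_exact_triangle
    (A B C : Type*) [AddCommGroup A] [Module (Polynomial ℤ) A]
    [AddCommGroup B] [Module (Polynomial ℤ) B] [AddCommGroup C] [Module (Polynomial ℤ) C]
    (i : A →ₗ[Polynomial ℤ] B) (p : B →ₗ[Polynomial ℤ] C) (d : C →ₗ[Polynomial ℤ] A)
    (h1 : Function.Exact i p) (h2 : Function.Exact p d) (h3 : Function.Exact d i)
    (hUB : Function.Bijective (Umul B))
    (k : ℕ) (hk : LinearMap.ker ((Umul A) ^ k) = LinearMap.ker i) :
    LinearMap.range ((Umul C) ^ k) = LinearMap.range p := by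
  apply le_antisymm
  · rintro _ ⟨c, rfl⟩
    -- show U^k c ∈ range p; by exactness range p = ker d
    rw [← LinearMap.exact_iff.mp h2]
    have hdc : d c ∈ LinearMap.ker ((Umul A) ^ k) := by
      rw [hk]
      have := (h3 (d c)).mpr ⟨c, rfl⟩
      exact this
    simp only [LinearMap.mem_ker] at hdc ⊢
    rw [umul_pow_apply, map_smul, ← umul_pow_apply, hdc]
  · rintro _ ⟨b, rfl⟩
    have hUBk : Function.Bijective ((Umul B) ^ k) := by
      rw [Module.End.coe_pow]
      exact hUB.iterate k
    obtain ⟨b', rfl⟩ := hUBk.2 b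
    refine ⟨p b', ?_⟩
    rw [umul_pow_apply, ← map_smul, ← umul_pow_apply]
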